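/- Let K be a non-Archimedean ordered field with prime subfield Q. Then 0 is not a limit point of the additive monoid Q≥0 ⊆ K (in the order topology of K), yet Q≥0 is antimatter: it has no atoms. -/

import Mathlib

/-- `a` is an atom of the additive submonoid `P`. -/
def IsAtomOf {K : Type*} [AddCommMonoid K] (P : AddSubmonoid K) (a : K) : Prop :=
  a ∈ P ∧ a ≠ 0 ∧ ∀ x ∈ P, ∀ y ∈ P, a = x + y → x = 0 ∨ y = 0

/-- `P` is atomic: every element is a finite sum of atoms. -/
def IsAtomicMonoid {K : Type*} [AddCommMonoid K] (P : AddSubmonoid K) : Prop :=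
  ∀ x ∈ P, ∃ s : Multiset K, (∀ a ∈ s, IsAtomOf P a) ∧ s.sum = x

/-- The set of factorizations of `x` into atoms of `P`. -/
def Factorizations {K : Type*} [AddCommMonoid K] (P : AddSubmonoid K) (x : K) :
    Set (Multiset K) :=
  {s | (∀ a ∈ s, IsAtomOf P a) ∧ s.sum = x}

/-- `P` is an FF-monoid. -/
def IsFFMonoid {K : Type*} [AddCommMonoid K] (P : AddSubmonoid K) : Prop :=
  IsAtomicMonoid P ∧ ∀ x ∈ P, (Factorizations P x).Finite

/-- `P` is a BF-monoid. -/
def IsBFMonoid {K : Type*} [AddCommMonoid K] (P : AddSubmonoid K) : Prop :=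
  IsAtomicMonoid P ∧ ∀ x ∈ P, {n : ℕ | ∃ s ∈ Factorizations P x, Multiset.card s = n}.Finite

theorem prime_subfield_cone_antimatter {K : Type*} [Field K] [LinearOrder K] [IsStrictOrderedRing K]
    (hnA : ¬∀ x : K, ∃ n : ℕ, x < (n : K))
    (Q : AddSubmonoid K)
    (hQ : (Q : Set K) = {x : K | ∃ q : ℚ, 0 ≤ q ∧ (q : K) = x}) :
    (∃ δ : K, 0 < δ ∧ ∀ x ∈ Q, x ≠ 0 → δ ≤ x) ∧ ∀ a : K, ¬IsAtomOf Q a := by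
  constructor
  · push_neg at hnA
    obtain ⟨x, hx⟩ := hnA
    have hx1 : (1 : K) ≤ x := le_trans (by exact_mod_cast le_refl (1:K)) (hx 1)
    have hx0 : (0 : K) < x := lt_of_lt_of_le one_pos hx1
    refine ⟨x⁻¹, inv_pos.mpr hx0, fun y hy hy0 => le_of_lt ?_⟩

    have : y ∈ (Q : Set K) := hy
    rw [hQ] at this
    obtain ⟨q, hq0, hqy⟩ := this
    have hqpos : (0 : ℚ) < q := by
      rcases lt_or_eq_of_le hq0 with h | h
      · exact h
      · exfalso; apply hy0; rw [← hqy, ← h]; simp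
    obtain ⟨n, hn⟩ := exists_nat_one_div_lt hqpos
    have h1 : ((1 : ℚ)/(n+1) : ℚ) < q := hn
    have h2 : ((n : K) + 1) ≤ x := by exact_mod_cast hx (n+1)
    have h3 : x⁻¹ ≤ ((n : K) + 1)⁻¹ := by
      apply inv_anti₀ (by positivity) h2
    have h4 : (((1 : ℚ)/(n+1) : ℚ) : K) < (q : K) := by exact_mod_cast h1
    have h5 : (((1 : ℚ)/(n+1) : ℚ) : K) = ((n : K) + 1)⁻¹ := by
      push_cast; rw [one_div]
    calc x⁻¹ ≤ ((n : K) + 1)⁻¹ := h3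
      _ = (((1 : ℚ)/(n+1) : ℚ) : K) := h5.symm
      _ < (q : K) := h4
      _ = y := hqy
  · rintro a ⟨haQ, ha0, hatom⟩
    have hhalf : a/2 ∈ Q := by
      have : a ∈ (Q : Set K) := haQ
      rw [hQ] at this
      obtain ⟨q, hq0, hqa⟩ := this
      have : a/2 ∈ (Q : Set K) := by
        rw [hQ]; exact ⟨q/2, by positivity, by push_cast; rw [hqa]⟩
      exact this
    rcases hatom (a/2) hhalf (a/2) hhalf (by ring) with h | h <;>
      exact ha0 (by rw [show a = a/2 + a/2 by ring, h]; ring)
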